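/- Fix an integer l ≥ 2 and a residue 0 ≤ r ≤ l−1. Define φ : ℤ^l → ℤ^l on coordinates (n, n_1, …, n_{l−1}) by p_0 = n + n_1 + r, p_i = n − n_i + n_{i+1} for 1 ≤ i ≤ l−2, and p_{l−1} = n − n_{l−1}. Then (i) φ is a bijection onto {(p_0,…,p_{l−1}) ∈ ℤ^l : ∑_i p_i ≡ r (mod l)}, with ∑_i p_i = ln + r; and (ii) under φ, writing p = ln + r, one has (1/l)·( (l/2)∑_i p_i² − (l+1)p/2 − p²/2 + (l+1)ln/2 + (r+1)r/2 ) = ∑_{i=1}^{l−1} n_i² − ∑_{i=1}^{l−2} n_i n_{i+1} + n_1 r + r(r−1)/2. -/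

import Mathlib

/-- A partition `λ = (λ_1 ≥ λ_2 ≥ ⋯)`: a non-increasing sequence of natural numbers with
finitely many nonzero terms.  Here `parts n` denotes `λ_{n+1}`. -/
structure Partition' where
  parts : ℕ → ℕ
  antitone : ∀ ⦃m n : ℕ⦄, m ≤ n → parts n ≤ parts m
  eventually_zero : ∃ N : ℕ, ∀ n ≥ N, parts n = 0

namespace Partition'

/-- `|λ|`, the number of boxes of the Young diagram of `λ`. -/
noncomputable def size (lam : Partition') : ℕ := ∑ᶠ n, lam.parts n

/-- The Young diagram of `λ`: boxes `(m, n)` (column `m`, row `n`) with `m < λ_{n+1}`. -/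
def cells (lam : Partition') : Set (ℕ × ℕ) := {c | c.1 < lam.parts c.2}

/-- Maya diagram of `λ`: `maya lam k` holds (bead value 1) iff `k ∉ {λ_m − m : m ≥ 1}`. -/
def maya (lam : Partition') (k : ℤ) : Prop :=
  ¬ ∃ m : ℕ, k = (lam.parts m : ℤ) - ((m : ℤ) + 1)

/-- The conjugate partition's `(m+1)`-st part: `λ'_{m+1} = #{rows of length > m}`. -/
noncomputable def conjParts (lam : Partition') (m : ℕ) : ℕ :=
  {j : ℕ | m < lam.parts j}.ncard

/-- Hook length of the box `(m, n)`: `(λ_{n+1} − 1 − m) + (λ'_{m+1} − 1 − n) + 1`. -/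
noncomputable def hookLength (lam : Partition') (m n : ℕ) : ℕ :=
  (lam.parts n - 1 - m) + (lam.conjParts m - 1 - n) + 1

end Partition'

/-- `c` is the charge of the 0/1-sequence `μ`:
`#{k < c : μ k = 1} = #{k ≥ c : μ k = 0}` (both sets finite). -/
def IsCharge (μ : ℤ → Prop) (c : ℤ) : Prop :=
  {k : ℤ | k < c ∧ μ k}.Finite ∧ {k : ℤ | c ≤ k ∧ ¬ μ k}.Finite ∧
    {k : ℤ | k < c ∧ μ k}.ncard = {k : ℤ | c ≤ k ∧ ¬ μ k}.ncard

/-- The `i`-th quotient sequence of the Maya diagram of `λ`: `μ_i(k) = μ_λ(l·k + i)`. -/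
def quotSeq (l : ℕ) (lam : Partition') (i : ℕ) : ℤ → Prop :=
  fun k => lam.maya ((l : ℤ) * k + (i : ℕ))

/-- `Q` is the `l`-quotient of `λ` with quotient charges `p`: for each `i`, `p i` is the
charge of the `i`-th quotient sequence `μ_i` and `μ_{Q i}(k) = μ_i(k + p i)`. -/
def IsQuotientWith (l : ℕ) (lam : Partition') (p : Fin l → ℤ) (Q : Fin l → Partition') : Prop :=
  ∀ i : Fin l, IsCharge (quotSeq l lam i) (p i) ∧
    ∀ k : ℤ, (Q i).maya k ↔ quotSeq l lam i (k + p i)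

/-- Two boxes are adjacent if they share an edge. -/
def Adj (a b : ℕ × ℕ) : Prop :=
  (a.1 = b.1 ∧ (a.2 = b.2 + 1 ∨ b.2 = a.2 + 1)) ∨
    (a.2 = b.2 ∧ (a.1 = b.1 + 1 ∨ b.1 = a.1 + 1))

/-- A set of boxes is connected: any two of its boxes are joined by a path of
edge-adjacent boxes inside the set. -/
def ConnectedIn (H : Set (ℕ × ℕ)) : Prop :=
  ∀ x ∈ H, ∀ y ∈ H,
    Relation.ReflTransGen (fun a b => a ∈ H ∧ b ∈ H ∧ Adj a b) x y

/-- `H` contains a 2×2 square of boxes. -/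
def HasSquare (H : Set (ℕ × ℕ)) : Prop :=
  ∃ m n : ℕ, (m, n) ∈ H ∧ (m + 1, n) ∈ H ∧ (m, n + 1) ∈ H ∧ (m + 1, n + 1) ∈ H

/-- `H` is a rim hook of length `l` of `λ`: a connected set of `l` boxes of `λ`,
containing no 2×2 square, whose removal leaves the Young diagram of a partition. -/
def IsRimHook (l : ℕ) (lam : Partition') (H : Set (ℕ × ℕ)) : Prop :=
  H ⊆ lam.cells ∧ H.Finite ∧ H.ncard = l ∧ ConnectedIn H ∧ ¬ HasSquare H ∧
    ∃ mu : Partition', mu.cells = lam.cells \ H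

/-- `μ` is obtained from `λ` by removing one rim hook of length `l`. -/
def RemoveHook (l : ℕ) (lam mu : Partition') : Prop :=
  ∃ H : Set (ℕ × ℕ), IsRimHook l lam H ∧ mu.cells = lam.cells \ H

/-- `λ` is an `l`-core: it admits no rim hook of length `l`. -/
def IsLCore (l : ℕ) (lam : Partition') : Prop := ¬ ∃ H : Set (ℕ × ℕ), IsRimHook l lam H

/-- `c` is the `l`-core of `λ`: obtained from `λ` by repeatedly removing rim hooks of
length `l` until none remain. -/
def IsCoreOf (l : ℕ) (lam c : Partition') : Prop :=
  Relation.ReflTransGen (RemoveHook l) lam c ∧ IsLCore l c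

/-- Number of boxes `(m,n)` of `λ` with content `m − n ≡ r (mod l)`. -/
noncomputable def contentCount (l : ℕ) (lam : Partition') (r : ℤ) : ℕ :=
  {c : ℕ × ℕ | c ∈ lam.cells ∧ ((c.1 : ℤ) - (c.2 : ℤ)) ≡ r [ZMOD (l : ℤ)]}.ncard

/-- `N_d(λ)`: the number of boxes `(m,n)` of `λ` with content `m − n = d`. -/
noncomputable def diagCount (lam : Partition') (d : ℤ) : ℕ :=
  {c : ℕ × ℕ | c ∈ lam.cells ∧ ((c.1 : ℤ) - (c.2 : ℤ)) = d}.ncard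

/-- `K` is the blended partition of the charges `p` and the `l`-tuple of partitions `R`:
`{p + K_m − m : m ≥ 1} = {l·(R_{i,m} − m + p_i) + i : 0 ≤ i ≤ l−1, m ≥ 1}` in `ℤ`. -/
def IsBlended (l : ℕ) (p : Fin l → ℤ) (R : Fin l → Partition') (K : Partition') : Prop :=
  {k : ℤ | ∃ m : ℕ, k = (∑ i, p i) + (K.parts m : ℤ) - ((m : ℤ) + 1)} =
    {k : ℤ | ∃ i : Fin l, ∃ m : ℕ,
      k = (l : ℤ) * (((R i).parts m : ℤ) - ((m : ℤ) + 1) + p i) + (i : ℕ)}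
/-- The change of variables `φ`: given `n` and `n_1, …, n_{l−1}` (encoded as `ν : ℕ → ℤ`,
only the values `ν 1, …, ν (l−1)` being relevant), the vector `(p_0, …, p_{l−1})` is
defined by `p_0 = n + n_1 + r`, `p_i = n − n_i + n_{i+1}` for `1 ≤ i ≤ l−2`, and
`p_{l−1} = n − n_{l−1}`. -/
def PhiRel (l : ℕ) (r : ℤ) (n : ℤ) (ν : ℕ → ℤ) (p : ℕ → ℤ) : Prop :=
  p 0 = n + ν 1 + r ∧
  (∀ i : ℕ, 1 ≤ i → i ≤ l - 2 → p i = n - ν i + ν (i + 1)) ∧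
  p (l - 1) = n - ν (l - 1)


lemma sumIccRange {M : Type*} [AddCommMonoid M] (f : ℕ → M) (m : ℕ) :
    ∑ i ∈ Finset.Icc 1 m, f i = ∑ i ∈ Finset.range m, f (i + 1) := by
  induction m with
  | zero => simp
  | succ k ih => rw [Finset.sum_Icc_succ_top (by omega), Finset.sum_range_succ, ih]

lemma sumRangeSplit {M : Type*} [AddCommMonoid M] (l : ℕ) (hl : 2 ≤ l) (f : ℕ → M) :
    ∑ i ∈ Finset.range l, f i = f 0 + (∑ i ∈ Finset.Icc 1 (l - 2), f i) + f (l - 1) := by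
  obtain ⟨m, rfl⟩ : ∃ m, l = m + 2 := ⟨l - 2, by omega⟩
  have h1 : m + 2 - 2 = m := by omega
  have h2 : m + 2 - 1 = m + 1 := by omega
  rw [h1, h2, Finset.sum_range_succ, Finset.sum_range_succ']
  rw [sumIccRange f m, add_comm (∑ i ∈ Finset.range m, f (i + 1)) (f 0)]

lemma midLin (n : ℤ) (ν : ℕ → ℤ) (m : ℕ) :
    ∑ i ∈ Finset.Icc 1 m, (n - ν i + ν (i + 1)) = (m : ℤ) * n + ν (m + 1) - ν 1 := by
  induction m with
  | zero => simp
  | succ k ih => rw [Finset.sum_Icc_succ_top (by omega), ih]; push_cast; ring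

lemma midSq (n : ℤ) (ν : ℕ → ℤ) (m : ℕ) :
    ∑ i ∈ Finset.Icc 1 m, ((n : ℚ) - (ν i : ℚ) + (ν (i + 1) : ℚ)) ^ 2
      = (m : ℚ) * (n : ℚ) ^ 2 + 2 * ∑ i ∈ Finset.Icc 1 m, (ν i : ℚ) ^ 2
        + (ν (m + 1) : ℚ) ^ 2 - (ν 1 : ℚ) ^ 2
        - 2 * ∑ i ∈ Finset.Icc 1 m, (ν i : ℚ) * (ν (i + 1) : ℚ)
        + 2 * (n : ℚ) * ((ν (m + 1) : ℚ) - (ν 1 : ℚ)) := by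
  induction m with
  | zero => simp
  | succ k ih =>
      rw [Finset.sum_Icc_succ_top (by omega : 1 ≤ k + 1),
        Finset.sum_Icc_succ_top (by omega : 1 ≤ k + 1),
        Finset.sum_Icc_succ_top (by omega : 1 ≤ k + 1), ih]
      push_cast; ring

lemma sumP (l : ℕ) (hl : 2 ≤ l) (r n : ℤ) (ν p : ℕ → ℤ) (hrel : PhiRel l r n ν p) :
    ∑ i ∈ Finset.range l, p i = l * n + r := by
  obtain ⟨h0, hmid, hlast⟩ := hrel
  rw [sumRangeSplit l hl, h0, hlast,
    Finset.sum_congr rfl (fun i hi => hmid i (Finset.mem_Icc.mp hi).1 (Finset.mem_Icc.mp hi).2),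
    midLin, show l - 2 + 1 = l - 1 from by omega,
    show ((l - 2 : ℕ) : ℤ) = (l : ℤ) - 2 from by omega]
  ring

lemma nuFormula (l : ℕ) (hl : 2 ≤ l) (r n : ℤ) (ν p : ℕ → ℤ) (hrel : PhiRel l r n ν p) :
    ∀ d j, 1 ≤ j → j + d = l - 1 →
      ν j = ((l : ℤ) - j) * n - ∑ i ∈ Finset.Ico j l, p i := by
  intro d
  induction d with
  | zero =>
      intro j hj1 hj
      have hje : j = l - 1 := by omega
      subst hje
      have h2 : Finset.Ico (l - 1) l = {l - 1} := by
        ext x; simp [Finset.mem_Ico]; omega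
      rw [h2, Finset.sum_singleton, show ((l : ℤ) - ((l - 1 : ℕ) : ℤ)) = 1 from by omega,
        one_mul]
      have := hrel.2.2
      omega
  | succ k ih =>
      intro j hj1 hj
      have hm := hrel.2.1 j hj1 (by omega)
      have hih := ih (j + 1) (by omega) (by omega)
      have hs : ∑ i ∈ Finset.Ico j l, p i = p j + ∑ i ∈ Finset.Ico (j + 1) l, p i :=
        Finset.sum_eq_sum_Ico_succ_bot (by omega) p
      have hj' : ν j = n + ν (j + 1) - p j := by omega
      rw [hs, hj', hih]
      push_cast; ring

/-- Fix `l ≥ 2` and `0 ≤ r ≤ l−1`. (i) The map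
`φ : (n, n_1, …, n_{l−1}) ↦ (p_0, …, p_{l−1})` is a bijection onto
`{(p_0, …, p_{l−1}) ∈ ℤ^l : ∑ p_i ≡ r (mod l)}`, with `∑ p_i = ln + r`; and (ii) under
`φ`, writing `p = ln + r`,
`(1/l)·((l/2)∑ p_i² − (l+1)p/2 − p²/2 + (l+1)ln/2 + (r+1)r/2)
  = ∑_{i=1}^{l−1} n_i² − ∑_{i=1}^{l−2} n_i n_{i+1} + n_1 r + r(r−1)/2`.
(Here tuples `(n_1, …, n_{l−1})` and `(p_0, …, p_{l−1})` are encoded as functions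
`ℕ → ℤ` vanishing outside the index ranges `[1, l−1]` and `[0, l−1]` respectively.) -/
theorem theta_to_affine_character_change_of_variables (l : ℕ) (hl : 2 ≤ l)
    (r : ℕ) (hr : r < l) :
    (∀ (n : ℤ) (ν : ℕ → ℤ), ν 0 = 0 → (∀ i, l ≤ i → ν i = 0) →
      ∃! p : ℕ → ℤ, (∀ i, l ≤ i → p i = 0) ∧ PhiRel l r n ν p) ∧
    (∀ (n : ℤ) (ν : ℕ → ℤ) (p : ℕ → ℤ), ν 0 = 0 → (∀ i, l ≤ i → ν i = 0) →
      (∀ i, l ≤ i → p i = 0) → PhiRel l r n ν p →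
      ∑ i ∈ Finset.range l, p i = l * n + r) ∧
    (∀ p : ℕ → ℤ, (∀ i, l ≤ i → p i = 0) →
      (∑ i ∈ Finset.range l, p i) % (l : ℤ) = (r : ℤ) →
      ∃! x : ℤ × (ℕ → ℤ), (x.2 0 = 0 ∧ ∀ i, l ≤ i → x.2 i = 0) ∧
        PhiRel l r x.1 x.2 p) ∧
    (∀ (n : ℤ) (ν : ℕ → ℤ) (p : ℕ → ℤ), ν 0 = 0 → (∀ i, l ≤ i → ν i = 0) →
      (∀ i, l ≤ i → p i = 0) → PhiRel l r n ν p →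
      (1 / (l : ℚ)) * (((l : ℚ) / 2) * ∑ i ∈ Finset.range l, (p i : ℚ) ^ 2
          - (((l : ℚ) + 1) * ((l : ℚ) * (n : ℚ) + (r : ℚ))) / 2
          - ((l : ℚ) * (n : ℚ) + (r : ℚ)) ^ 2 / 2
          + (((l : ℚ) + 1) * (l : ℚ) * (n : ℚ)) / 2 + (((r : ℚ) + 1) * (r : ℚ)) / 2)
        = ∑ i ∈ Finset.Icc 1 (l - 1), (ν i : ℚ) ^ 2
          - ∑ i ∈ Finset.Icc 1 (l - 2), (ν i : ℚ) * (ν (i + 1) : ℚ)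
          + (ν 1 : ℚ) * (r : ℚ) + (r : ℚ) * ((r : ℚ) - 1) / 2) := by
  have hl0 : (l : ℚ) ≠ 0 := Nat.cast_ne_zero.mpr (by omega)
  refine ⟨?_, ?_, ?_, ?_⟩
  · -- part 1
    intro n ν h0 hz
    refine ⟨fun i => if i = 0 then n + ν 1 + r else if i = l - 1 then n - ν (l - 1)
        else if i ≤ l - 2 then n - ν i + ν (i + 1) else 0, ⟨?_, ?_, ?_, ?_⟩, ?_⟩
    · intro i hi; dsimp only; rw [if_neg (by omega), if_neg (by omega), if_neg (by omega)]
    · dsimp only; rw [if_pos rfl]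
    · intro i h1 h2; dsimp only; rw [if_neg (by omega), if_neg (by omega), if_pos h2]
    · dsimp only; rw [if_neg (by omega), if_pos rfl]
    · rintro q ⟨hqz, hq0, hqmid, hqlast⟩
      funext i
      by_cases hi0 : i = 0
      · subst hi0; rw [if_pos rfl]; exact hq0
      by_cases hil : l ≤ i
      · rw [hqz i hil]
        rw [if_neg hi0, if_neg (by omega), if_neg (by omega)]
      by_cases hlast : i = l - 1
      · rw [hlast, hqlast]; rw [if_neg (by omega), if_pos rfl]
      · rw [hqmid i (by omega) (by omega)]
        rw [if_neg hi0, if_neg hlast, if_pos (by omega)]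
  · -- part 2
    intro n ν p _ _ _ hrel
    exact sumP l hl r n ν p hrel
  · -- part 3
    intro p hpz hmod
    have hd : (l : ℤ) ∣ (∑ i ∈ Finset.range l, p i) - r := Int.dvd_self_sub_of_emod_eq hmod
    set S := ∑ i ∈ Finset.range l, p i with hS
    set n₀ : ℤ := (S - r) / l with hn0
    have hln : (l : ℤ) * n₀ = S - r := Int.mul_ediv_cancel' hd
    set ν₀ : ℕ → ℤ := fun j => if 1 ≤ j ∧ j ≤ l - 1 then
        ((l : ℤ) - j) * n₀ - ∑ i ∈ Finset.Ico j l, p i else 0 with hν₀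
    have hν₀e : ∀ j, 1 ≤ j → j ≤ l - 1 →
        ν₀ j = ((l : ℤ) - j) * n₀ - ∑ i ∈ Finset.Ico j l, p i := by
      intro j h1 h2; rw [hν₀]; dsimp only; rw [if_pos ⟨h1, h2⟩]
    have hrel₀ : PhiRel l r n₀ ν₀ p := by
      refine ⟨?_, ?_, ?_⟩
      · rw [hν₀e 1 le_rfl (by omega)]
        have hs1 : ∑ i ∈ Finset.Ico 1 l, p i = S - p 0 := by
          rw [hS, Finset.range_eq_Ico, Finset.sum_eq_sum_Ico_succ_bot (by omega : 0 < l) p]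
          ring
        rw [hs1]; push_cast
        linarith [hln]
      · intro i h1 h2
        rw [hν₀e i h1 (by omega), hν₀e (i + 1) (by omega) (by omega),
          Finset.sum_eq_sum_Ico_succ_bot (by omega : i < l) p]
        push_cast; ring
      · rw [hν₀e (l - 1) (by omega) le_rfl]
        have h2 : Finset.Ico (l - 1) l = {l - 1} := by
          ext x; simp [Finset.mem_Ico]; omega
        rw [h2, Finset.sum_singleton,
          show ((l : ℤ) - ((l - 1 : ℕ) : ℤ)) = 1 from by omega, one_mul]
        ring
    refine ⟨(n₀, ν₀), ⟨⟨?_, ?_⟩, hrel₀⟩, ?_⟩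
    · rw [hν₀]; dsimp only; rw [if_neg (by omega)]
    · intro i hi; rw [hν₀]; dsimp only; rw [if_neg (by omega)]
    · rintro ⟨n', ν'⟩ ⟨⟨hz0, hzl⟩, hrel'⟩
      dsimp only at hz0 hzl hrel' ⊢
      have hsum' := sumP l hl r n' ν' p hrel'
      have hn' : n' = n₀ := by
        have he : (l : ℤ) * n' = (l : ℤ) * n₀ := by rw [hln]; omega
        exact mul_left_cancel₀ (by exact_mod_cast (by omega : (l : ℤ) ≠ 0)) he
      subst hn'
      have hvv : ν' = ν₀ := by
        funext j
        rcases Nat.lt_or_ge j l with hjl | hjl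
        · rcases Nat.eq_zero_or_pos j with hj0 | hj1
          · rw [hj0, hz0, hν₀]; dsimp only; rw [if_neg (by omega)]
          · rw [nuFormula l hl r n₀ ν' p hrel' (l - 1 - j) j hj1 (by omega),
              hν₀e j hj1 (by omega)]
        · rw [hzl j hjl, hν₀]; dsimp only; rw [if_neg (by omega)]
      rw [hvv]
  · -- part 4
    intro n ν p h0 hz hpz hrel
    obtain ⟨hP0, hPmid, hPl⟩ := hrel
    rw [sumRangeSplit l hl]
    have hm : ∑ i ∈ Finset.Icc 1 (l - 2), (p i : ℚ) ^ 2
        = ∑ i ∈ Finset.Icc 1 (l - 2), ((n : ℚ) - (ν i : ℚ) + (ν (i + 1) : ℚ)) ^ 2 :=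
      Finset.sum_congr rfl fun i hi => by
        rw [hPmid i (Finset.mem_Icc.mp hi).1 (Finset.mem_Icc.mp hi).2]; push_cast; ring
    rw [hm, midSq n ν (l - 2), hP0, hPl,
      show l - 2 + 1 = l - 1 from by omega,
      show ((l - 2 : ℕ) : ℚ) = (l : ℚ) - 2 from by rw [Nat.cast_sub hl]; norm_num]
    have hA : ∑ i ∈ Finset.Icc 1 (l - 1), (ν i : ℚ) ^ 2
        = ∑ i ∈ Finset.Icc 1 (l - 2), (ν i : ℚ) ^ 2 + (ν (l - 1) : ℚ) ^ 2 := by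
      rw [show l - 1 = l - 2 + 1 from by omega]
      exact Finset.sum_Icc_succ_top (by omega) _
    rw [hA]
    push_cast
    field_simp
    ring
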